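/- Fix constants 0 < t₀ < c₀ and μ > 1 with t₀ = (1 − 1/μ)²·c₀. Define ξ : ℝ → ℝ by ξ(t) = 0 for t ≤ t₀, ξ(t) = μ·(√t − √t₀)² for t₀ ≤ t ≤ c₀, and ξ(t) = t − c₀·(1 − 1/μ) for t ≥ c₀. Then ξ is continuously differentiable on ℝ, ξ is convex and nondecreasing, ξ'(c₀) = 1, and on the open interval (t₀, c₀) it satisfies the differential equation 2t·ξ''(t) + ξ'(t) = μ with ξ(t₀) = ξ'(t₀) = 0. -/

import Mathlib

/-- Properties of the piecewise function `ξ`: it is `C¹`, convex, nondecreasing,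
`ξ'(c₀) = 1`, it solves `2t ξ'' + ξ' = μ` on `(t₀, c₀)`, and `ξ(t₀) = ξ'(t₀) = 0`. -/
theorem stmt_9 (c₀ μ t₀ : ℝ) (hc₀ : 0 < c₀) (hμ : 1 < μ)
    (ht₀ : t₀ = (1 - 1 / μ) ^ 2 * c₀)
    (ξ : ℝ → ℝ)
    (h1 : ∀ t ≤ t₀, ξ t = 0)
    (h2 : ∀ t, t₀ ≤ t → t ≤ c₀ → ξ t = μ * (Real.sqrt t - Real.sqrt t₀) ^ 2)
    (h3 : ∀ t, c₀ ≤ t → ξ t = t - c₀ * (1 - 1 / μ)) :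
    ContDiff ℝ 1 ξ ∧ ConvexOn ℝ Set.univ ξ ∧ Monotone ξ ∧ deriv ξ c₀ = 1 ∧
      (∀ t ∈ Set.Ioo t₀ c₀, 2 * t * deriv (deriv ξ) t + deriv ξ t = μ) ∧
      ξ t₀ = 0 ∧ deriv ξ t₀ = 0 := by
  have hμ0 : (0:ℝ) < μ := lt_trans one_pos hμ
  have hμinv : 1 / μ < 1 := by rw [div_lt_one hμ0]; exact hμ
  have hμinv0 : 0 < 1 / μ := by positivity
  have hμ1 : 0 < 1 - 1 / μ := by linarith
  have ht₀pos : 0 < t₀ := by rw [ht₀]; positivity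
  have ht₀c₀ : t₀ < c₀ := by
    have hx : (1 - 1/μ)^2 < 1 := by nlinarith
    rw [ht₀]; nlinarith
  have hsc : 0 < Real.sqrt c₀ := Real.sqrt_pos.mpr hc₀
  have hst : 0 < Real.sqrt t₀ := Real.sqrt_pos.mpr ht₀pos
  have ha : Real.sqrt t₀ = (1 - 1 / μ) * Real.sqrt c₀ := by
    rw [ht₀, Real.sqrt_mul (sq_nonneg _), Real.sqrt_sq hμ1.le]
  have key : μ - μ * Real.sqrt t₀ / Real.sqrt c₀ = 1 := by
    rw [ha]; field_simp; ring
  set g : ℝ → ℝ := fun t => min 1 (μ - μ * Real.sqrt t₀ / Real.sqrt (max t t₀)) with hgdef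
  have hφmax : ∀ t : ℝ, 0 < Real.sqrt (max t t₀) :=
    fun t => Real.sqrt_pos.mpr (lt_of_lt_of_le ht₀pos (le_max_right _ _))
  have hφmono : Monotone fun t => μ - μ * Real.sqrt t₀ / Real.sqrt (max t t₀) := by
    intro x y hxy
    have h1' : Real.sqrt (max x t₀) ≤ Real.sqrt (max y t₀) :=
      Real.sqrt_le_sqrt (max_le_max hxy le_rfl)
    have h2' : μ * Real.sqrt t₀ / Real.sqrt (max y t₀) ≤
        μ * Real.sqrt t₀ / Real.sqrt (max x t₀) := by
      gcongr
      all_goals first | exact hφmax x | positivity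
    simpa using sub_le_sub_left h2' μ
  have hφ0 : ∀ t : ℝ, 0 ≤ μ - μ * Real.sqrt t₀ / Real.sqrt (max t t₀) := by
    intro t
    have h1' : Real.sqrt t₀ ≤ Real.sqrt (max t t₀) := Real.sqrt_le_sqrt (le_max_right _ _)
    have h2' : Real.sqrt t₀ / Real.sqrt (max t t₀) ≤ 1 := (div_le_one (hφmax t)).mpr h1'
    have : μ * (Real.sqrt t₀ / Real.sqrt (max t t₀)) ≤ μ * 1 := by
      apply mul_le_mul_of_nonneg_left h2' hμ0.le
    rw [mul_div_assoc]; linarith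
  have hgmono : Monotone g := fun x y h => min_le_min le_rfl (hφmono h)
  have hgnonneg : ∀ t, 0 ≤ g t := fun t => le_min one_pos.le (hφ0 t)
  have hgcont : Continuous g := by
    apply continuous_const.min
    apply continuous_const.sub
    exact continuous_const.div
      (Real.continuous_sqrt.comp (continuous_id.max continuous_const))
      (fun t => (hφmax t).ne')
  have hg0 : ∀ t ≤ t₀, g t = 0 := by
    intro t ht
    have hmax : max t t₀ = t₀ := max_eq_right ht
    have : μ - μ * Real.sqrt t₀ / Real.sqrt t₀ = 0 := by field_simp; ring
    simp only [hgdef, hmax, this]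
    simp
  have hgmid : ∀ s, t₀ < s → s ≤ c₀ → g s = μ - μ * Real.sqrt t₀ / Real.sqrt s := by
    intro s hs1 hs2
    have hspos : 0 < s := ht₀pos.trans hs1
    have hmax : max s t₀ = s := max_eq_left hs1.le
    have hss : 0 < Real.sqrt s := Real.sqrt_pos.mpr hspos
    have hle : μ - μ * Real.sqrt t₀ / Real.sqrt s ≤ 1 := by
      rw [← key]
      have h2' : μ * Real.sqrt t₀ / Real.sqrt c₀ ≤ μ * Real.sqrt t₀ / Real.sqrt s := by
        gcongr
        all_goals first | exact Real.sqrt_le_sqrt hs2 | positivity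
      linarith
    simp only [hgdef, hmax]
    exact min_eq_right hle
  have hgc : g c₀ = 1 := by
    rw [hgmid c₀ ht₀c₀ le_rfl, key]
  have hg1 : ∀ t, c₀ ≤ t → g t = 1 := by
    intro t ht
    have : g c₀ ≤ g t := hgmono ht
    rw [hgc] at this
    have h2' : g t ≤ 1 := min_le_left _ _
    linarith
  -- derivative of the middle piece
  have hm : ∀ t : ℝ, 0 < t → HasDerivAt (fun s => μ * (Real.sqrt s - Real.sqrt t₀) ^ 2)
      (μ * (2 * (Real.sqrt t - Real.sqrt t₀) ^ 1 * (1 / (2 * Real.sqrt t)))) t :=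
    fun t ht => (((Real.hasDerivAt_sqrt ht.ne').sub_const _).pow 2).const_mul μ
  have hmval : ∀ t : ℝ, 0 < t →
      μ * (2 * (Real.sqrt t - Real.sqrt t₀) ^ 1 * (1 / (2 * Real.sqrt t))) =
        μ - μ * Real.sqrt t₀ / Real.sqrt t := by
    intro t ht
    have hss : Real.sqrt t ≠ 0 := (Real.sqrt_pos.mpr ht).ne'
    field_simp
  -- ξ has derivative g everywhere
  have hd : ∀ t, HasDerivAt ξ (g t) t := by
    intro t
    rcases lt_trichotomy t t₀ with h | h | h
    · -- t < t₀
      have he : ξ =ᶠ[nhds t] fun _ => (0:ℝ) := by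
        filter_upwards [Iio_mem_nhds h] with s hs
        exact h1 s hs.le
      rw [hg0 t h.le]
      exact (hasDerivAt_const t 0).congr_of_eventuallyEq he
    · -- t = t₀
      subst h
      have left : HasDerivWithinAt ξ 0 (Set.Iic t) t :=
        (hasDerivAt_const t (0:ℝ)).hasDerivWithinAt.congr
          (fun y hy => h1 y hy) (h1 t le_rfl)
      have hval0 : μ * (2 * (Real.sqrt t - Real.sqrt t) ^ 1 * (1 / (2 * Real.sqrt t))) = 0 := by
        simp
      have r1 : HasDerivWithinAt (fun s => μ * (Real.sqrt s - Real.sqrt t) ^ 2) 0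
          (Set.Ici t) t := by
        have := (hm t ht₀pos).hasDerivWithinAt (s := Set.Ici t)
        rwa [hval0] at this
      have r2 : ξ =ᶠ[nhdsWithin t (Set.Ici t)] fun s => μ * (Real.sqrt s - Real.sqrt t) ^ 2 := by
        filter_upwards [Icc_mem_nhdsGE_of_mem (Set.mem_Ico.mpr ⟨le_refl t, ht₀c₀⟩)] with s hs
        exact h2 s hs.1 hs.2
      have right : HasDerivWithinAt ξ 0 (Set.Ici t) t :=
        r1.congr_of_eventuallyEq r2 (h2 t le_rfl ht₀c₀.le)
      have := left.union right
      rw [Set.Iic_union_Ici] at this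
      rw [hg0 t le_rfl]
      exact hasDerivWithinAt_univ.mp this
    · rcases lt_trichotomy t c₀ with h' | h' | h'
      · -- t₀ < t < c₀
        have htpos : 0 < t := ht₀pos.trans h
        have he : ξ =ᶠ[nhds t] fun s => μ * (Real.sqrt s - Real.sqrt t₀) ^ 2 := by
          filter_upwards [Ioo_mem_nhds h h'] with s hs
          exact h2 s hs.1.le hs.2.le
        have H := (hm t htpos).congr_of_eventuallyEq he
        rw [hgmid t h h'.le, ← hmval t htpos]
        exact H
      · -- t = c₀
        subst h'
        have hval1 : μ * (2 * (Real.sqrt t - Real.sqrt t₀) ^ 1 * (1 / (2 * Real.sqrt t))) = 1 := by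
          rw [hmval t hc₀, key]
        have l1 : HasDerivWithinAt (fun s => μ * (Real.sqrt s - Real.sqrt t₀) ^ 2) 1
            (Set.Iic t) t := by
          have := (hm t hc₀).hasDerivWithinAt (s := Set.Iic t)
          rwa [hval1] at this
        have l2 : ξ =ᶠ[nhdsWithin t (Set.Iic t)] fun s => μ * (Real.sqrt s - Real.sqrt t₀) ^ 2 := by
          filter_upwards [Icc_mem_nhdsLE_of_mem (Set.mem_Ioc.mpr ⟨ht₀c₀, le_refl t⟩)] with s hs
          exact h2 s hs.1 hs.2
        have left : HasDerivWithinAt ξ 1 (Set.Iic t) t :=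
          l1.congr_of_eventuallyEq l2 (h2 t ht₀c₀.le le_rfl)
        have right : HasDerivWithinAt ξ 1 (Set.Ici t) t :=
          ((hasDerivAt_id t).sub_const (t * (1 - 1/μ))).hasDerivWithinAt.congr
            (fun y hy => h3 y hy) (h3 t le_rfl)
        have := left.union right
        rw [Set.Iic_union_Ici] at this
        rw [hg1 t le_rfl]
        exact hasDerivWithinAt_univ.mp this
      · -- c₀ < t
        have he : ξ =ᶠ[nhds t] fun s => s - c₀ * (1 - 1/μ) := by
          filter_upwards [Ioi_mem_nhds h'] with s hs
          exact h3 s hs.le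
        rw [hg1 t h'.le]
        exact ((hasDerivAt_id t).sub_const _).congr_of_eventuallyEq he
  have hderiv : deriv ξ = g := funext fun t => (hd t).deriv
  have hdiff : Differentiable ℝ ξ := fun t => (hd t).differentiableAt
  refine ⟨?_, ?_, ?_, ?_, ?_, h1 t₀ le_rfl, ?_⟩
  · exact contDiff_one_iff_deriv.mpr ⟨hdiff, by rw [hderiv]; exact hgcont⟩
  · exact Monotone.convexOn_univ_of_deriv hdiff (by rw [hderiv]; exact hgmono)
  · exact monotone_of_deriv_nonneg hdiff (fun x => by rw [hderiv]; exact hgnonneg x)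
  · rw [hderiv]; exact hgc
  · intro t ht
    obtain ⟨ht1, ht2⟩ := ht
    have htpos : 0 < t := ht₀pos.trans ht1
    have hss : 0 < Real.sqrt t := Real.sqrt_pos.mpr htpos
    have hderiv2 : HasDerivAt (fun s => μ - μ * Real.sqrt t₀ / Real.sqrt s)
        (μ * Real.sqrt t₀ / (2 * Real.sqrt t * t)) t := by
      have hdiv := (hasDerivAt_const t (μ * Real.sqrt t₀)).div
        (Real.hasDerivAt_sqrt htpos.ne') hss.ne'
      have h2' := (hasDerivAt_const t μ).sub hdiv
      convert h2' using 1
      · rfl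
      · rfl
      · rfl
      rw [Real.sq_sqrt htpos.le]
      field_simp
      ring
    have heq : g =ᶠ[nhds t] fun s => μ - μ * Real.sqrt t₀ / Real.sqrt s := by
      filter_upwards [Ioo_mem_nhds ht1 ht2] with s hs
      exact hgmid s hs.1 hs.2.le
    have e1 : deriv (deriv ξ) t = μ * Real.sqrt t₀ / (2 * Real.sqrt t * t) := by
      rw [hderiv, heq.deriv_eq, hderiv2.deriv]
    rw [e1, hderiv, hgmid t ht1 ht2.le]
    field_simp
    ring
  · rw [hderiv]; exact hg0 t₀ le_rfl
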